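/- Let E be a set of five lines in PG(3,2) such that any two of them have a common point. Then E contains a pencil, i.e., three lines that are coplanar and pass through a common point. -/

import Mathlib

open Module Submodule Set

section Aux

variable {K : Type*} [Field K] {V : Type*} [AddCommGroup V] [Module K V]

private lemma fr_pos [FiniteDimensional K V] {p : Submodule K V} (h : p ≠ ⊥) :
    0 < finrank K p := by
  rw [Nat.pos_iff_ne_zero]
  simpa [Submodule.finrank_eq_zero] using h

/-- two rank-one submodules with one contained in the other are equal -/
private lemma pt_eq [FiniteDimensional K V] {x y : Submodule K V}
    (hx : finrank K x = 1) (hy : finrank K y = 1) (h : x ≤ y) : x = y :=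
  Submodule.eq_of_le_of_finrank_le h (by omega)

/-- meet of two distinct lines is a point, join is a plane -/
private lemma line_meet [FiniteDimensional K V] {a b : Submodule K V}
    (ha : finrank K a = 2) (hb : finrank K b = 2) (hab : a ≠ b) (hm : a ⊓ b ≠ ⊥) :
    finrank K ↥(a ⊓ b) = 1 ∧ finrank K ↥(a ⊔ b) = 3 := by
  have h1 : 0 < finrank K ↥(a ⊓ b) := fr_pos hm
  have h2 : finrank K ↥(a ⊓ b) ≤ 2 := ha ▸ Submodule.finrank_mono inf_le_left
  have h3 : finrank K ↥(a ⊓ b) ≠ 2 := by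
    intro h
    exact hab ((Submodule.eq_of_le_of_finrank_le inf_le_left (by omega)).symm.trans
      (Submodule.eq_of_le_of_finrank_le inf_le_right (by omega)))
  have h4 := Submodule.finrank_sup_add_finrank_inf_eq a b
  constructor <;> omega

/-- a line through two distinct points inside `P` lies in `P` -/
private lemma le_of_two_points [FiniteDimensional K V] {x y l P : Submodule K V}
    (hx : finrank K x = 1) (hy : finrank K y = 1) (hxy : x ≠ y)
    (hxl : x ≤ l) (hyl : y ≤ l) (hl : finrank K l = 2)
    (hxP : x ≤ P) (hyP : y ≤ P) : l ≤ P := by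
  have hinf : x ⊓ y = ⊥ := by
    by_contra h
    have h1 : finrank K ↥(x ⊓ y) ≤ 1 := hx ▸ Submodule.finrank_mono inf_le_left
    have h2 : 0 < finrank K ↥(x ⊓ y) := fr_pos h
    exact hxy ((pt_eq (by omega) hx inf_le_left).symm.trans (pt_eq (by omega) hy inf_le_right))
  have h4 := Submodule.finrank_sup_add_finrank_inf_eq x y
  rw [hinf, finrank_bot] at h4
  have : l = x ⊔ y :=
    (Submodule.eq_of_le_of_finrank_le (sup_le hxl hyl) (by omega)).symm
  rw [this]
  exact sup_le hxP hyP

private lemma rank1_eq_span [FiniteDimensional K V] {q : Submodule K V} (hq : finrank K q = 1)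
    {v : V} (hv : v ∈ q) (hv0 : v ≠ 0) : q = K ∙ v := by
  refine (Submodule.eq_of_le_of_finrank_le ((Submodule.span_singleton_le_iff_mem v q).mpr hv) ?_).symm
  rw [hq, finrank_span_singleton hv0]

private lemma finite_submodule [Finite V] : Finite (Submodule K V) :=
  Finite.of_injective (fun p => (p : Set V)) SetLike.coe_injective

/-- counting rank-one submodules inside `U` -/
private lemma count_points [FiniteDimensional K V] [Finite V] {U : Submodule K V} {n : ℕ}
    (hcard : Nat.card U ≤ n + 1) :
    {q : Submodule K V | finrank K q = 1 ∧ q ≤ U}.ncard ≤ n := by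
  classical
  set S := {q : Submodule K V | finrank K q = 1 ∧ q ≤ U}
  set t : Set V := (U : Set V) \ {0} with ht
  have hvec : ∀ q ∈ S, ∃ v : V, v ∈ q ∧ v ≠ 0 := by
    intro q hq
    refine Submodule.exists_mem_ne_zero_of_ne_bot ?_
    intro h
    have := hq.1
    rw [h, finrank_bot] at this
    omega
  choose f hf1 hf2 using hvec
  have hmaps : ∀ q ∈ S, (fun q => if h : q ∈ S then f q h else 0) q ∈ t := by
    intro q hq
    simp only [hq, dif_pos]
    exact ⟨hq.2 (hf1 q hq), hf2 q hq⟩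
  have hinj : Set.InjOn (fun q => if h : q ∈ S then f q h else 0) S := by
    intro q hq q' hq' h
    simp only [hq, hq', dif_pos] at h
    rw [rank1_eq_span hq.1 (hf1 q hq) (hf2 q hq), h,
      ← rank1_eq_span hq'.1 (hf1 q' hq') (hf2 q' hq')]
  have := Set.ncard_le_ncard_of_injOn _ hmaps hinj (Set.toFinite t)
  have h0 : (0 : V) ∈ (U : Set V) := U.zero_mem
  have hU : (U : Set V).ncard = Nat.card U := (Nat.card_coe_set_eq _).symm
  have hdiff : t.ncard = (U : Set V).ncard - 1 :=
    Set.ncard_diff_singleton_of_mem h0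
  omega

/-- cardinality of a 3-dimensional space over `ZMod 2` -/
private lemma card_of_rank3 {W : Type*} [AddCommGroup W] [Module (ZMod 2) W] [Finite W]
    (h : finrank (ZMod 2) W = 3) : Nat.card W = 8 := by
  have : Fintype W := Fintype.ofFinite W
  rw [Nat.card_eq_fintype_card, card_eq_pow_finrank (K := ZMod 2), h, ZMod.card]
  norm_num

private lemma count_points' {V : Type*} [AddCommGroup V] [Module (ZMod 2) V]
    [FiniteDimensional (ZMod 2) V] [Finite V] {U : Submodule (ZMod 2) V}
    (hU : finrank (ZMod 2) U = 3) :
    {q : Submodule (ZMod 2) V | finrank (ZMod 2) q = 1 ∧ q ≤ U}.ncard ≤ 7 := by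
  refine count_points ?_
  rw [card_of_rank3 hU]

/-- counting rank-three submodules containing a point, in a 4-dimensional space -/
private lemma count_planes {V : Type*} [AddCommGroup V] [Module (ZMod 2) V]
    [FiniteDimensional (ZMod 2) V] [Finite V] (hV : finrank (ZMod 2) V = 4)
    {p : Submodule (ZMod 2) V} (hp : finrank (ZMod 2) p = 1) :
    {P : Submodule (ZMod 2) V | finrank (ZMod 2) P = 3 ∧ p ≤ P}.ncard ≤ 7 := by
  classical
  set K := ZMod 2
  set D := Module.Dual K V
  have hD : Finite D :=
    Finite.of_injective (fun f => (f : V → K)) DFunLike.coe_injective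
  have hfinD : Finite (Submodule K D) := finite_submodule
  have hann : ∀ W : Submodule K V, finrank K W.dualAnnihilator = finrank K V - finrank K W := by
    intro W
    have h1 : finrank K (V ⧸ W) = finrank K W.dualAnnihilator :=
      (Subspace.quotEquivAnnihilator W).finrank_eq
    have h2 := Submodule.finrank_quotient_add_finrank W
    omega
  have hannp : finrank K p.dualAnnihilator = 3 := by rw [hann, hV, hp]
  set S := {P : Submodule K V | finrank K P = 3 ∧ p ≤ P}
  set T := {q : Submodule K D | finrank K q = 1 ∧ q ≤ p.dualAnnihilator}
  have hmaps : ∀ P ∈ S, Submodule.dualAnnihilator P ∈ T := by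
    intro P hP
    exact ⟨by rw [hann, hV, hP.1], Submodule.dualAnnihilator_anti hP.2⟩
  have hinj : Set.InjOn (Submodule.dualAnnihilator (M := V)) S := by
    intro P _ Q _ h
    have := congrArg Submodule.dualCoannihilator h
    rwa [Subspace.dualAnnihilator_dualCoannihilator_eq,
      Subspace.dualAnnihilator_dualCoannihilator_eq] at this
  have h1 := Set.ncard_le_ncard_of_injOn _ hmaps hinj (Set.toFinite T)
  have h2 : T.ncard ≤ 7 := count_points' hannp
  omega

/-- pigeonhole: five elements, a symmetric pairing into at most seven values,
all pair values distinct is impossible -/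
private lemma pigeonhole {α β : Type*} (s : Finset α) (h5 : s.card = 5)
    (g : α → α → β) (T : Set β) (hT : T.ncard ≤ 7) (hTfin : T.Finite)
    (hmem : ∀ a ∈ s, ∀ b ∈ s, a ≠ b → g a b ∈ T)
    (hcon : ∀ a ∈ s, ∀ b ∈ s, ∀ c ∈ s, ∀ d ∈ s, a ≠ b → c ≠ d → g a b = g c d →
      (a = c ∧ b = d) ∨ (a = d ∧ b = c)) : False := by
  classical
  set F : α × α → β := fun x => g x.1 x.2
  have himg : (s.offDiag.image F).card ≤ 7 := by
    have hsub : s.offDiag.image F ⊆ hTfin.toFinset := by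
      intro b hb
      obtain ⟨x, hx, rfl⟩ := Finset.mem_image.mp hb
      rw [Finset.mem_offDiag] at hx
      rw [Set.Finite.mem_toFinset]
      exact hmem _ hx.1 _ hx.2.1 hx.2.2
    have := Finset.card_le_card hsub
    rw [← Set.ncard_eq_toFinset_card T hTfin] at this
    omega
  have hfib : ∀ b ∈ s.offDiag.image F, (s.offDiag.filter fun x => F x = b).card ≤ 2 := by
    intro b hb
    obtain ⟨x, hx, rfl⟩ := Finset.mem_image.mp hb
    have hsub : (s.offDiag.filter fun y => F y = F x) ⊆ {x, (x.2, x.1)} := by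
      intro y hy
      rw [Finset.mem_filter, Finset.mem_offDiag] at hy
      rw [Finset.mem_offDiag] at hx
      rcases hcon _ hy.1.1 _ hy.1.2.1 _ hx.1 _ hx.2.1 hy.1.2.2 hx.2.2 hy.2 with ⟨h1, h2⟩ | ⟨h1, h2⟩
      · simp [Prod.ext_iff, h1, h2]
      · simp [Prod.ext_iff, h1, h2]
    exact (Finset.card_le_card hsub).trans ((Finset.card_insert_le _ _).trans (by simp))
  have := Finset.card_le_mul_card_image s.offDiag 2 hfib
  rw [Finset.offDiag_card, h5] at this
  omega

private lemma three_distinct {α : Type*} (P : α → Prop) {a b c d : α}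
    (hab : a ≠ b) (hcd : c ≠ d) (h1 : ¬(a = c ∧ b = d)) (h2 : ¬(a = d ∧ b = c))
    (ha : P a) (hb : P b) (hc : P c) (hd : P d) :
    ∃ x y z, x ≠ y ∧ x ≠ z ∧ y ≠ z ∧ P x ∧ P y ∧ P z := by
  by_cases hca : c = a
  · subst hca
    exact ⟨c, b, d, hab, hcd, fun h => h1 ⟨rfl, h⟩, ha, hb, hd⟩
  by_cases hcb : c = b
  · subst hcb
    exact ⟨a, c, d, hab, fun h => h2 ⟨h, rfl⟩, hcd, ha, hb, hd⟩
  · exact ⟨a, b, c, hab, fun h => hca h.symm, fun h => hcb h.symm, ha, hb, hc⟩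

end Aux

/-- Any set of five pairwise intersecting lines of `PG(3,2)` contains a pencil:
three distinct lines lying in a common plane and passing through a common point. -/
theorem five_lines_contain_pencil
    (E : Set (Submodule (ZMod 2) (Fin 4 → ZMod 2)))
    (hcard : E.ncard = 5)
    (hdim : ∀ l ∈ E, Module.finrank (ZMod 2) l = 2)
    (hmeet : ∀ l₁ ∈ E, ∀ l₂ ∈ E, l₁ ≠ l₂ → l₁ ⊓ l₂ ≠ ⊥) :
    ∃ l₁ ∈ E, ∃ l₂ ∈ E, ∃ l₃ ∈ E, l₁ ≠ l₂ ∧ l₁ ≠ l₃ ∧ l₂ ≠ l₃ ∧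
      (∃ Pl : Submodule (ZMod 2) (Fin 4 → ZMod 2), Module.finrank (ZMod 2) Pl = 3 ∧
        l₁ ≤ Pl ∧ l₂ ≤ Pl ∧ l₃ ≤ Pl) ∧
      (∃ p : Submodule (ZMod 2) (Fin 4 → ZMod 2), Module.finrank (ZMod 2) p = 1 ∧
        p ≤ l₁ ∧ p ≤ l₂ ∧ p ≤ l₃) := by
  classical
  by_contra hno
  have hV4 : finrank (ZMod 2) (Fin 4 → ZMod 2) = 4 := Module.finrank_fin_fun (ZMod 2)
  haveI : Finite (Submodule (ZMod 2) (Fin 4 → ZMod 2)) := finite_submodule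
  have hfin : E.Finite := Set.finite_of_ncard_ne_zero (by omega)
  set s : Finset _ := hfin.toFinset with hs
  have hscard : s.card = 5 := by
    rw [hs, ← Set.ncard_eq_toFinset_card E hfin]; exact hcard
  have hmem' : ∀ l, l ∈ s ↔ l ∈ E := fun l => hfin.mem_toFinset
  have hL1 : ∀ l₁ ∈ E, ∀ l₂ ∈ E, l₁ ≠ l₂ →
      finrank (ZMod 2) ↥(l₁ ⊓ l₂) = 1 ∧ finrank (ZMod 2) ↥(l₁ ⊔ l₂) = 3 :=
    fun l₁ h₁ l₂ h₂ h => line_meet (hdim _ h₁) (hdim _ h₂) h (hmeet _ h₁ _ h₂ h)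
  obtain ⟨a, has, b, hbs, hab⟩ := Finset.one_lt_card.mp (by omega : 1 < s.card)
  have ha : a ∈ E := (hmem' a).mp has
  have hb : b ∈ E := (hmem' b).mp hbs
  set p := a ⊓ b with hpdef
  have hp : finrank (ZMod 2) ↥p = 1 := (hL1 a ha b hb hab).1
  by_cases hall : ∀ l ∈ E, p ≤ l
  · -- concurrent case: all lines pass through p
    refine pigeonhole s hscard (fun x y => x ⊔ y)
      {P : Submodule (ZMod 2) (Fin 4 → ZMod 2) | finrank (ZMod 2) P = 3 ∧ p ≤ P}
      (count_planes hV4 hp) (Set.toFinite _) ?_ ?_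
    · intro x hx y hy hxy
      exact ⟨(hL1 x ((hmem' x).mp hx) y ((hmem' y).mp hy) hxy).2,
        le_trans (hall x ((hmem' x).mp hx)) le_sup_left⟩
    · intro x hx y hy z hz w hw hxy hzw heq
      have heq' : x ⊔ y = z ⊔ w := heq
      by_contra hcon'
      rw [not_or] at hcon'
      obtain ⟨u, v, t, huv, hut, hvt, hu, hv, ht⟩ :=
        three_distinct (fun l => l ∈ E ∧ l ≤ x ⊔ y) hxy hzw hcon'.1 hcon'.2
          ⟨(hmem' x).mp hx, le_sup_left⟩ ⟨(hmem' y).mp hy, le_sup_right⟩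
          ⟨(hmem' z).mp hz, by rw [heq']; exact le_sup_left⟩
          ⟨(hmem' w).mp hw, by rw [heq']; exact le_sup_right⟩
      exact hno ⟨u, hu.1, v, hv.1, t, ht.1, huv, hut, hvt,
        ⟨x ⊔ y, (hL1 x ((hmem' x).mp hx) y ((hmem' y).mp hy) hxy).2, hu.2, hv.2, ht.2⟩,
        ⟨p, hp, hall u hu.1, hall v hv.1, hall t ht.1⟩⟩
  · -- coplanar case: all lines lie in the plane P = a ⊔ b
    push_neg at hall
    obtain ⟨c, hc, hpc⟩ := hall
    set P := a ⊔ b with hPdef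
    have hP3 : finrank (ZMod 2) ↥P = 3 := (hL1 a ha b hb hab).2
    have hstep : ∀ l ∈ E, l ≠ a → l ≠ b → ¬ p ≤ l → l ≤ P := by
      intro l hl hla hlb hpl
      have hq1 : finrank (ZMod 2) ↥(l ⊓ a) = 1 := (hL1 l hl a ha hla).1
      have hq2 : finrank (ZMod 2) ↥(l ⊓ b) = 1 := (hL1 l hl b hb hlb).1
      have hne : l ⊓ a ≠ l ⊓ b := by
        intro h
        have h1 : l ⊓ a ≤ p := le_inf inf_le_right (h ▸ inf_le_right)
        exact hpl ((pt_eq hq1 hp h1) ▸ inf_le_left)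
      exact le_of_two_points hq1 hq2 hne inf_le_left inf_le_left (hdim l hl)
        (le_trans inf_le_right le_sup_left) (le_trans inf_le_right le_sup_right)
    have hca : c ≠ a := fun h => hpc (h ▸ inf_le_left)
    have hcb : c ≠ b := fun h => hpc (h ▸ inf_le_right)
    have hcP : c ≤ P := hstep c hc hca hcb hpc
    have hallP : ∀ l ∈ E, l ≤ P := by
      intro l hl
      by_cases hla : l = a
      · rw [hla]; exact le_sup_left
      by_cases hlb : l = b
      · rw [hlb]; exact le_sup_right
      by_cases hpl : p ≤ l
      · by_cases hlc : l = c
        · rw [hlc]; exact hcP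
        have hq3 : finrank (ZMod 2) ↥(l ⊓ c) = 1 := (hL1 l hl c hc hlc).1
        have hpq3 : p ≠ l ⊓ c := fun h => hpc (h ▸ inf_le_right)
        exact le_of_two_points hp hq3 hpq3 hpl inf_le_left (hdim l hl)
          (le_trans inf_le_left le_sup_left) (le_trans inf_le_right hcP)
      · exact hstep l hl hla hlb hpl
    refine pigeonhole s hscard (fun x y => x ⊓ y)
      {q : Submodule (ZMod 2) (Fin 4 → ZMod 2) | finrank (ZMod 2) q = 1 ∧ q ≤ P}
      (count_points' hP3) (Set.toFinite _) ?_ ?_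
    · intro x hx y hy hxy
      exact ⟨(hL1 x ((hmem' x).mp hx) y ((hmem' y).mp hy) hxy).1,
        le_trans inf_le_left (hallP x ((hmem' x).mp hx))⟩
    · intro x hx y hy z hz w hw hxy hzw heq
      have heq' : x ⊓ y = z ⊓ w := heq
      by_contra hcon'
      rw [not_or] at hcon'
      obtain ⟨u, v, t, huv, hut, hvt, hu, hv, ht⟩ :=
        three_distinct (fun l => l ∈ E ∧ x ⊓ y ≤ l) hxy hzw hcon'.1 hcon'.2
          ⟨(hmem' x).mp hx, inf_le_left⟩ ⟨(hmem' y).mp hy, inf_le_right⟩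
          ⟨(hmem' z).mp hz, by rw [heq']; exact inf_le_left⟩
          ⟨(hmem' w).mp hw, by rw [heq']; exact inf_le_right⟩
      exact hno ⟨u, hu.1, v, hv.1, t, ht.1, huv, hut, hvt,
        ⟨P, hP3, hallP u hu.1, hallP v hv.1, hallP t ht.1⟩,
        ⟨x ⊓ y, (hL1 x ((hmem' x).mp hx) y ((hmem' y).mp hy) hxy).1, hu.2, hv.2, ht.2⟩⟩
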